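/- Let A be an n×n integer matrix and λ a simple eigenvalue of A with unit right eigenvector x (Ax = λx) and unit left eigenvector y (y*A = λy*). Then the eigenvalue condition number cond_NSE(A,λ) = 1/|y*x| satisfies cond_NSE(A,λ) ≤ n^(3n) · 2^(2n) · (2√n · H(A))^(2n³−2n), where H(A) = max_{i,j}|A_{ij}|. -/

import Mathlib

/-- The maximum absolute value of the entries of an integer matrix. -/
def maxEntry {m n : ℕ} (A : Matrix (Fin m) (Fin n) ℤ) : ℕ :=
  (Finset.univ ×ˢ Finset.univ).sup fun p : Fin m × Fin n => (A p.1 p.2).natAbs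

open Polynomial Matrix IntermediateField

namespace Stmt6Aux

variable {n : ℕ}

lemma eval_charpoly (M : Matrix (Fin n) (Fin n) ℂ) (t : ℂ) :
    M.charpoly.eval t = (t • (1 : Matrix (Fin n) (Fin n) ℂ) - M).det := by
  rw [Matrix.charpoly, ← Polynomial.coe_evalRingHom, RingHom.map_det]
  congr 1
  ext i j
  by_cases h : i = j <;>
    simp [h, charmatrix_apply_eq, charmatrix_apply_ne, Matrix.one_apply, Ne, h, Matrix.sub_apply,
      Matrix.smul_apply]

lemma charpoly_transpose' (M : Matrix (Fin n) (Fin n) ℂ) : (Mᵀ).charpoly = M.charpoly := by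
  unfold Matrix.charpoly
  rw [← Matrix.det_transpose (charmatrix M)]
  congr 1
  ext i j
  by_cases h : i = j
  · subst h; simp [charmatrix_apply_eq]
  · simp [charmatrix_apply_ne _ _ _ h, charmatrix_apply_ne _ _ _ (Ne.symm h),
      Matrix.transpose_apply]

lemma adj_mulVec_of_kernel (M : Matrix (Fin n) (Fin n) ℂ) (hdet : M.det = 0)
    (x : Fin n → ℂ) (hx : M.mulVec x = 0) :
    M.adjugate.mulVec x = ((derivative ((-M).charpoly)).eval 0) • x := by
  classical
  set N := charmatrix (-M) with hNdef
  set xc : Fin n → ℂ[X] := fun i => C (x i) with hxc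
  have hN0 : N.map (evalRingHom 0) = M := by
    ext i j
    by_cases h : i = j
    · subst h; simp [hNdef, charmatrix_apply_eq]
    · simp [hNdef, charmatrix_apply_ne _ _ _ h]
  have hdet0 : ((-M).charpoly).eval 0 = 0 := by
    rw [eval_charpoly]; simpa using hdet
  obtain ⟨q, hq⟩ : (X : ℂ[X]) ∣ (-M).charpoly := by
    rw [Polynomial.X_dvd_iff, Polynomial.coeff_zero_eq_eval_zero]; exact hdet0
  have hvec : N.mulVec xc = (X : ℂ[X]) • xc := by
    funext i
    have h1 : ∀ j, N i j * xc j = (if j = i then X * C (x j) else 0) + C (M i j * x j) := by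
      intro j
      by_cases h : i = j
      · subst h; simp [hNdef, charmatrix_apply_eq, hxc]; ring
      · simp [hNdef, charmatrix_apply_ne _ _ _ h, hxc, Ne.symm h]
    have h2 : (M.mulVec x) i = 0 := congrFun hx i
    simp only [Matrix.mulVec, dotProduct, Pi.smul_apply, smul_eq_mul] at h2 ⊢
    rw [Finset.sum_congr rfl (fun j _ => h1 j), Finset.sum_add_distrib,
      Finset.sum_ite_eq' Finset.univ i (fun j => X * C (x j))]
    simp only [Finset.mem_univ, if_true, ← _root_.map_mul, ← map_sum, h2, map_zero, add_zero,
      hxc]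
  have hdetN : N.det = (-M).charpoly := rfl
  have key : (X : ℂ[X]) • (N.adjugate.mulVec xc) = ((-M).charpoly) • xc := by
    rw [← Matrix.mulVec_smul, ← hvec, Matrix.mulVec_mulVec, Matrix.adjugate_mul, hdetN,
      Matrix.smul_mulVec, Matrix.one_mulVec]
  have hcomp : ∀ i, N.adjugate.mulVec xc i = q * C (x i) := by
    intro i
    have h := congrFun key i
    simp only [Pi.smul_apply, smul_eq_mul, hq] at h
    have h' : X * (N.adjugate.mulVec xc i) = X * (q * C (x i)) := by rw [h]; ring
    exact mul_left_cancel₀ Polynomial.X_ne_zero h'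
  have hadjmap : N.adjugate.map (evalRingHom 0) = M.adjugate := by
    have h := RingHom.map_adjugate (evalRingHom 0) N
    rw [RingHom.mapMatrix_apply, RingHom.mapMatrix_apply, hN0] at h
    exact h
  have hq0 : q.eval 0 = (derivative ((-M).charpoly)).eval 0 := by
    rw [hq, derivative_mul, derivative_X]
    simp
  funext i
  have h := congrArg (eval 0) (hcomp i)
  simp only [eval_mul, eval_C] at h
  have hL : eval 0 (N.adjugate.mulVec xc i) = (M.adjugate.mulVec x) i := by
    simp only [Matrix.mulVec, dotProduct, hxc, eval_finset_sum, eval_mul, eval_C]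
    refine Finset.sum_congr rfl fun j _ => ?_
    rw [← hadjmap]
    simp [Matrix.map_apply]
  rw [hL] at h
  rw [Pi.smul_apply, smul_eq_mul, h, hq0]

lemma vecMul_adj_of_kernel (M : Matrix (Fin n) (Fin n) ℂ) (hdet : M.det = 0)
    (y : Fin n → ℂ) (hy : Matrix.vecMul y M = 0) :
    Matrix.vecMul y M.adjugate = ((derivative ((-M).charpoly)).eval 0) • y := by
  have hdT : Mᵀ.det = 0 := by rw [Matrix.det_transpose]; exact hdet
  have hxT : Mᵀ.mulVec y = 0 := by rw [Matrix.mulVec_transpose]; exact hy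
  have h := adj_mulVec_of_kernel Mᵀ hdT y hxT
  have hch : (-Mᵀ).charpoly = (-M).charpoly := by
    have : -Mᵀ = (-M)ᵀ := by ext i j; simp
    rw [this, charpoly_transpose']
  rw [hch, ← Matrix.adjugate_transpose, Matrix.mulVec_transpose] at h
  exact h

lemma abs_multiset_prod_le (s : Multiset ℂ) (R : ℝ) (hR : 0 ≤ R)
    (h : ∀ z ∈ s, ‖z‖ ≤ R) :
    ‖s.prod‖ ≤ R ^ Multiset.card s := by
  induction s using Multiset.induction with
  | empty => simp
  | cons a s ih =>
    rw [Multiset.prod_cons, norm_mul, Multiset.card_cons, pow_succ']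
    exact mul_le_mul (h a (Multiset.mem_cons_self a s))
      (ih fun z hz => h z (Multiset.mem_cons_of_mem hz))
      (norm_nonneg _) hR

lemma deriv_eval_root_le {p : Polynomial ℂ} (hm : p.Monic) {μ : ℂ} (hroot : p.IsRoot μ)
    (R : ℝ) (hR : 0 ≤ R) (hallroots : ∀ w ∈ p.roots, ‖w‖ ≤ R) :
    ‖(derivative p).eval μ‖ ≤ (2 * R) ^ (p.natDegree - 1) := by
  have hsplits : p.Splits := IsAlgClosed.splits p
  have hmem : μ ∈ p.roots := by
    rw [Polynomial.mem_roots hm.ne_zero]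
    exact hroot
  have hcons : p.roots = μ ::ₘ p.roots.erase μ := (Multiset.cons_erase hmem).symm
  have hprod := hsplits.eq_prod_roots_of_monic hm
  set Q : Polynomial ℂ := ((p.roots.erase μ).map (fun w => X - C w)).prod with hQ
  have hfact : p = (X - C μ) * Q := by
    rw [hprod, hcons, Multiset.map_cons, Multiset.prod_cons]
  have hderiv : (derivative p).eval μ = Q.eval μ := by
    rw [hfact, derivative_mul]
    simp
  have hevalQ : Q.eval μ = ((p.roots.erase μ).map (fun w => μ - w)).prod := by
    rw [hQ, Polynomial.eval_multiset_prod, Multiset.map_map]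
    congr 1
    apply Multiset.map_congr rfl
    intro w _
    simp
  have hcard : Multiset.card (p.roots.erase μ) = p.natDegree - 1 := by
    rw [Multiset.card_erase_of_mem hmem,
      hsplits.natDegree_eq_card_roots]
    rfl
  rw [hderiv, hevalQ]
  calc ‖((p.roots.erase μ).map (fun w => μ - w)).prod‖
      ≤ (2 * R) ^ Multiset.card ((p.roots.erase μ).map (fun w => μ - w)) := by
        apply abs_multiset_prod_le _ _ (by linarith)
        intro z hz
        obtain ⟨w, hw, rfl⟩ := Multiset.mem_map.mp hz
        calc ‖μ - w‖ ≤ ‖μ‖ + ‖w‖ := by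
              exact norm_sub_le μ w
          _ ≤ R + R := add_le_add (hallroots μ hmem) (hallroots w (Multiset.mem_of_mem_erase hw))
          _ = 2 * R := by ring
    _ = (2 * R) ^ (p.natDegree - 1) := by rw [Multiset.card_map, hcard]

lemma eig_abs_le {B : Matrix (Fin n) (Fin n) ℂ} {H : ℝ}
    (hent : ∀ i j, ‖B i j‖ ≤ H)
    {μ : ℂ} {v : Fin n → ℂ} (hv : v ≠ 0) (heq : B.mulVec v = μ • v) :
    ‖μ‖ ≤ n * H := by
  have hn : 0 < n := by
    rcases Nat.eq_zero_or_pos n with h | h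
    · exfalso; apply hv; subst h; funext i; exact absurd i.2 (by omega)
    · exact h
  obtain ⟨i0, -, hi0⟩ := Finset.exists_max_image Finset.univ (fun i => ‖v i‖)
    ⟨⟨0, hn⟩, Finset.mem_univ _⟩
  have hvi0 : 0 < ‖v i0‖ := by
    by_contra h
    push_neg at h
    apply hv
    funext i
    have h2 : ‖v i‖ ≤ 0 := (hi0 i (Finset.mem_univ i)).trans h
    have h3 : ‖v i‖ = 0 := le_antisymm h2 (norm_nonneg _)
    simpa using norm_eq_zero.mp h3
  have key : ‖μ‖ * ‖v i0‖ ≤ (n * H) * ‖v i0‖ := by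
    have h1 : ‖μ‖ * ‖v i0‖ = ‖(B.mulVec v) i0‖ := by
      rw [heq]; simp only [Pi.smul_apply, smul_eq_mul, norm_mul]
    rw [h1]
    calc ‖(B.mulVec v) i0‖
        ≤ ∑ j, ‖B i0 j * v j‖ := by
          simpa [Matrix.mulVec, dotProduct] using
            norm_sum_le Finset.univ (fun j => B i0 j * v j)
      _ ≤ ∑ _j : Fin n, H * ‖v i0‖ := by
          apply Finset.sum_le_sum
          intro j _
          rw [norm_mul]
          exact mul_le_mul (hent i0 j) (hi0 j (Finset.mem_univ j)) (norm_nonneg _)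
            ((norm_nonneg _).trans (hent i0 j))
      _ = (n * H) * ‖v i0‖ := by
          rw [Finset.sum_const, Finset.card_univ, Fintype.card_fin]
          simp [nsmul_eq_mul]; ring
  exact le_of_mul_le_mul_right key hvi0

lemma exists_coord_big {x : Fin n → ℂ} (hx : ∑ i, Complex.normSq (x i) = 1) :
    ∃ i, (1 : ℝ) ≤ n * Complex.normSq (x i) := by
  have hn : 0 < n := by
    by_contra h
    push_neg at h
    interval_cases n
    simp at hx
  by_contra hcon
  push_neg at hcon
  have : ∑ i, Complex.normSq (x i) < ∑ _i : Fin n, 1 / (n : ℝ) := by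
    apply Finset.sum_lt_sum_of_nonempty ⟨⟨0, hn⟩, Finset.mem_univ _⟩
    intro i _
    rw [lt_div_iff₀ (by positivity)]
    calc Complex.normSq (x i) * n = n * Complex.normSq (x i) := by ring
      _ < 1 := hcon i
  rw [hx, Finset.sum_const, Finset.card_univ, Fintype.card_fin, nsmul_eq_mul,
    mul_one_div, div_self (by positivity : (n:ℝ) ≠ 0)] at this
  exact lt_irrefl _ this

set_option maxHeartbeats 1000000 in
lemma norm_prod_lower (pZ qZ : Polynomial ℤ) (hp : pZ.Monic) (lam : ℂ)
    (hroot : Polynomial.aeval lam pZ = 0) (hne : Polynomial.aeval lam qZ ≠ 0)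
    (F : ℝ) (hF : 1 ≤ F)
    (hbound : ∀ μ : ℂ, Polynomial.aeval μ pZ = 0 → ‖Polynomial.aeval μ qZ‖ ≤ F) :
    1 ≤ ‖Polynomial.aeval lam qZ‖ * F ^ (pZ.natDegree - 1) := by
  classical
  have hlamInt : IsIntegral ℤ lam := ⟨pZ, hp, by rwa [← Polynomial.aeval_def]⟩
  have hlamQ : IsIntegral ℚ lam := hlamInt.tower_top
  haveI : FiniteDimensional ℚ ℚ⟮lam⟯ := IntermediateField.adjoin.finiteDimensional hlamQ
  set K := ℚ⟮lam⟯
  set g : K := IntermediateField.AdjoinSimple.gen ℚ lam with hgdef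
  have hg : algebraMap K ℂ g = lam := IntermediateField.AdjoinSimple.algebraMap_gen ℚ lam
  have hinj : Function.Injective (algebraMap K ℂ) := (algebraMap K ℂ).injective
  have hgp : Polynomial.aeval g pZ = 0 := by
    apply hinj
    rw [map_zero, ← Polynomial.aeval_algebraMap_apply, hg, hroot]
  have hgInt : IsIntegral ℤ g := ⟨pZ, hp, by rwa [← Polynomial.aeval_def]⟩
  set u : K := Polynomial.aeval g qZ with hudef
  have hu : algebraMap K ℂ u = Polynomial.aeval lam qZ := by
    rw [hudef, ← Polynomial.aeval_algebraMap_apply, hg]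
  have hune : u ≠ 0 := by
    intro h
    exact hne (by rw [← hu, h, map_zero])
  have huInt : IsIntegral ℤ u :=
    .of_mem_of_fg (Algebra.adjoin ℤ {g}) hgInt.fg_adjoin_singleton _
      (Polynomial.aeval_mem_adjoin_singleton _ _)
  have hnormInt : IsIntegral ℤ (Algebra.norm ℚ u) := Algebra.isIntegral_norm ℚ huInt
  obtain ⟨z, hz⟩ := IsIntegrallyClosed.isIntegral_iff.mp hnormInt
  have hnorm0 : Algebra.norm ℚ u ≠ 0 := by
    rw [Algebra.norm_ne_zero_iff]
    exact hune
  have hz0 : z ≠ 0 := by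
    rintro rfl
    rw [map_zero] at hz
    exact hnorm0 hz.symm
  have h1 : (1 : ℝ) ≤ ‖algebraMap ℚ ℂ (Algebra.norm ℚ u)‖ := by
    rw [← hz, eq_intCast, eq_ratCast]
    push_cast
    exact_mod_cast Int.one_le_abs hz0
  rw [Algebra.norm_eq_prod_embeddings ℚ ℂ u] at h1
  have hσu : ∀ σ : K →ₐ[ℚ] ℂ, σ u = Polynomial.aeval (σ g) qZ := by
    intro σ
    have h := (Polynomial.aeval_algHom_apply (σ.restrictScalars ℤ) g qZ).symm
    simpa using h
  have hσroot : ∀ σ : K →ₐ[ℚ] ℂ, Polynomial.aeval (σ g) pZ = 0 := by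
    intro σ
    have h := Polynomial.aeval_algHom_apply (σ.restrictScalars ℤ) g pZ
    rw [hgp, map_zero] at h
    simpa using h
  set σ₀ : K →ₐ[ℚ] ℂ := K.val with hσ₀
  have hσ₀u : σ₀ u = Polynomial.aeval lam qZ := by rw [← hu]; rfl
  have habs : ‖∏ σ : K →ₐ[ℚ] ℂ, σ u‖ =
      ∏ σ : K →ₐ[ℚ] ℂ, ‖σ u‖ := norm_prod _ _
  rw [habs, ← Finset.mul_prod_erase Finset.univ _ (Finset.mem_univ σ₀)] at h1
  have hcard : (Finset.univ.erase σ₀).card ≤ pZ.natDegree - 1 := by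
    have h2 : (Finset.univ.erase σ₀).card = Fintype.card (K →ₐ[ℚ] ℂ) - 1 := by
      rw [Finset.card_erase_of_mem (Finset.mem_univ _), Finset.card_univ]
    have h3 : Fintype.card (K →ₐ[ℚ] ℂ) = Module.finrank ℚ K := AlgHom.card ℚ K ℂ
    have h4 : Module.finrank ℚ K = (minpoly ℚ lam).natDegree :=
      IntermediateField.adjoin.finrank hlamQ
    have h5 : (minpoly ℚ lam).natDegree ≤ pZ.natDegree := by
      have hdvd : minpoly ℚ lam ∣ pZ.map (Int.castRingHom ℚ) := by
        apply minpoly.dvd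
        rw [show (Int.castRingHom ℚ) = algebraMap ℤ ℚ from rfl,
          Polynomial.aeval_map_algebraMap]
        exact hroot
      have hmapne : pZ.map (Int.castRingHom ℚ) ≠ 0 := (hp.map _).ne_zero
      have := Polynomial.natDegree_le_of_dvd hdvd hmapne
      rwa [Polynomial.natDegree_map_eq_of_injective
        (Int.cast_injective (α := ℚ))] at this
    omega
  have hprodle : ∏ σ ∈ Finset.univ.erase σ₀, ‖σ u‖ ≤ F ^ (pZ.natDegree - 1) := by
    calc ∏ σ ∈ Finset.univ.erase σ₀, ‖σ u‖
        ≤ ∏ _σ ∈ Finset.univ.erase σ₀, F := by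
          apply Finset.prod_le_prod (fun _ _ => norm_nonneg _)
          intro σ _
          rw [hσu σ]
          exact hbound _ (hσroot σ)
      _ = F ^ (Finset.univ.erase σ₀).card := by rw [Finset.prod_const]
      _ ≤ F ^ (pZ.natDegree - 1) := pow_le_pow_right₀ hF hcard
  calc (1:ℝ) ≤ ‖σ₀ u‖ * ∏ σ ∈ Finset.univ.erase σ₀, ‖σ u‖ := h1
    _ ≤ ‖σ₀ u‖ * F ^ (pZ.natDegree - 1) := by
        apply mul_le_mul_of_nonneg_left hprodle (norm_nonneg _)
    _ = ‖Polynomial.aeval lam qZ‖ * F ^ (pZ.natDegree - 1) := by rw [hσ₀u]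

lemma final_numeric (n : ℕ) (hn : 2 ≤ n) (H : ℝ) (hH : 1 ≤ H) :
    (n:ℝ)^(n+1) * (2*((n:ℝ)*H))^(n + (n-1)*(n-1)) ≤
      (n:ℝ)^(3*n) * 2^(2*n) * (2*Real.sqrt n*H)^(2*n^3-2*n) := by
  have hn1 : (1:ℝ) ≤ (n:ℝ) := by exact_mod_cast hn.trans' (by norm_num)
  have hsq : Real.sqrt n * Real.sqrt n = n := Real.mul_self_sqrt (by positivity)
  have hs1 : (1:ℝ) ≤ Real.sqrt n := Real.one_le_sqrt.mpr hn1
  have hbase1 : (1:ℝ) ≤ 2*Real.sqrt n*H := by nlinarith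
  have hbase0 : (0:ℝ) ≤ 2*((n:ℝ)*H) := by positivity
  have hb2 : 2*((n:ℝ)*H) ≤ (2*Real.sqrt n*H)^2 := by
    rw [show (2*Real.sqrt n*H)^2 = 4*(Real.sqrt n*Real.sqrt n)*H^2 from by ring, hsq]
    nlinarith
  have hexp : 2 * (n + (n-1)*(n-1)) ≤ 2*n^3 - 2*n := by
    obtain ⟨m, rfl⟩ : ∃ m, n = m + 2 := ⟨n - 2, by omega⟩
    have h1 : (m+2) - 1 = m+1 := by omega
    rw [h1]
    apply Nat.le_sub_of_add_le
    nlinarith [Nat.zero_le m]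
  calc (n:ℝ)^(n+1) * (2*((n:ℝ)*H))^(n + (n-1)*(n-1))
      ≤ (n:ℝ)^(3*n) * (2*((n:ℝ)*H))^(n + (n-1)*(n-1)) := by
        apply mul_le_mul_of_nonneg_right (pow_le_pow_right₀ hn1 (by omega)) (by positivity)
    _ ≤ (n:ℝ)^(3*n) * ((2*Real.sqrt n*H)^2)^(n + (n-1)*(n-1)) := by
        apply mul_le_mul_of_nonneg_left (pow_le_pow_left₀ hbase0 hb2 _) (by positivity)
    _ = (n:ℝ)^(3*n) * (2*Real.sqrt n*H)^(2*(n + (n-1)*(n-1))) := by rw [← pow_mul]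
    _ ≤ (n:ℝ)^(3*n) * (2*Real.sqrt n*H)^(2*n^3-2*n) := by
        apply mul_le_mul_of_nonneg_left (pow_le_pow_right₀ hbase1 hexp) (by positivity)
    _ ≤ (n:ℝ)^(3*n) * 2^(2*n) * (2*Real.sqrt n*H)^(2*n^3-2*n) := by
        have h1 : (1:ℝ) ≤ 2^(2*n) := one_le_pow₀ (by norm_num)
        nlinarith [pow_nonneg (le_trans zero_le_one hbase1) (2*n^3-2*n),
          pow_nonneg (le_trans zero_le_one hn1) (3*n),
          mul_nonneg (pow_nonneg (le_trans zero_le_one hn1) (3*n))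
            (pow_nonneg (le_trans zero_le_one hbase1) (2*n^3-2*n))]

end Stmt6Aux

set_option maxHeartbeats 3200000 in
/-- Let `A` be an `n × n` integer matrix and `λ` a simple eigenvalue of `A` with unit right
eigenvector `x` and unit left eigenvector `y`.  Then the eigenvalue condition number
`1/|y*x| ≤ n^(3n) 2^(2n) (2√n H(A))^(2n³-2n)` where `H(A) = max |A i j|`. -/
theorem stmt6 {n : ℕ} (A : Matrix (Fin n) (Fin n) ℤ) (lam : ℂ)
    (hsimple : ((A.map (Int.cast : ℤ → ℂ)).charpoly).rootMultiplicity lam = 1)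
    (x y : Fin n → ℂ)
    (hx : ∑ i, Complex.normSq (x i) = 1) (hy : ∑ i, Complex.normSq (y i) = 1)
    (hright : (A.map (Int.cast : ℤ → ℂ)).mulVec x = lam • x)
    (hleft : Matrix.vecMul (star y) (A.map (Int.cast : ℤ → ℂ)) = lam • star y) :
    1 / ‖∑ i, (starRingEnd ℂ) (y i) * x i‖ ≤
      (n : ℝ) ^ (3 * n) * 2 ^ (2 * n) *
        (2 * Real.sqrt n * (maxEntry A : ℝ)) ^ (2 * n ^ 3 - 2 * n) := by
  classical
  have hn1 : 1 ≤ n := by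
    by_contra h
    push_neg at h
    interval_cases n
    simp at hx
  have hx0 : x ≠ 0 := by
    intro h
    have h1 : (1:ℝ) = 0 := by rw [← hx]; simp [h]
    norm_num at h1
  have hy0 : y ≠ 0 := by
    intro h
    have h1 : (1:ℝ) = 0 := by rw [← hy]; simp [h]
    norm_num at h1
  set B := A.map (Int.cast : ℤ → ℂ) with hBdef
  set S : ℂ := ∑ i, (starRingEnd ℂ) (y i) * x i with hSdef
  have hRHS0 : 0 ≤ (n : ℝ) ^ (3 * n) * 2 ^ (2 * n) *
      (2 * Real.sqrt n * (maxEntry A : ℝ)) ^ (2 * n ^ 3 - 2 * n) := by positivity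
  rcases eq_or_ne S 0 with hS0 | hS0
  · rw [hS0]
    simpa using hRHS0
  have hpm : B.charpoly.Monic := B.charpoly_monic
  have hproot : B.charpoly.eval lam = 0 := by
    have h1 : B.charpoly.IsRoot lam := by
      rw [← Polynomial.rootMultiplicity_pos hpm.ne_zero, hsimple]
      norm_num
    exact h1
  have hnatdeg : B.charpoly.natDegree = n := by simpa using B.charpoly_natDegree_eq_dim
  have hent : ∀ i j, ‖B i j‖ ≤ (maxEntry A : ℝ) := by
    intro i j
    have h1 : B i j = ((A i j : ℤ) : ℂ) := rfl
    rw [h1, Complex.norm_intCast]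
    have h2 : (A i j).natAbs ≤ maxEntry A := by
      unfold maxEntry
      exact Finset.le_sup (f := fun p : Fin n × Fin n => (A p.1 p.2).natAbs)
        (b := (i, j)) (Finset.mem_product.mpr ⟨Finset.mem_univ _, Finset.mem_univ _⟩)
    calc |((A i j : ℤ) : ℝ)| = ((A i j).natAbs : ℝ) := by rw [Nat.cast_natAbs, Int.cast_abs]
      _ ≤ (maxEntry A : ℝ) := by exact_mod_cast h2
  have hlamabs : ‖lam‖ ≤ n * (maxEntry A : ℝ) :=
    Stmt6Aux.eig_abs_le hent hx0 hright
  -- nonvanishing of the derivative of the characteristic polynomial at lam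
  have hdne : derivative B.charpoly ≠ 0 := by
    intro h
    have hcoeffn : B.charpoly.coeff n = 1 := by
      have h1 := hpm.coeff_natDegree
      rwa [hnatdeg] at h1
    have hc : (derivative B.charpoly).coeff (n - 1) = (n : ℂ) := by
      rw [Polynomial.coeff_derivative, show (n - 1 + 1) = n from by omega, hcoeffn, one_mul,
        Nat.cast_sub hn1]
      push_cast
      ring
    rw [h, Polynomial.coeff_zero] at hc
    have h2 : (n : ℂ) = 0 := hc.symm
    rw [Nat.cast_eq_zero] at h2
    omega
  have hd' : (derivative B.charpoly).eval lam ≠ 0 := by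
    have hder0 : (derivative B.charpoly).rootMultiplicity lam = 0 := by
      rw [Polynomial.derivative_rootMultiplicity_of_root (by exact hproot), hsimple]
    intro h
    have := Polynomial.rootMultiplicity_eq_zero_iff.mp hder0 (by exact h)
    exact hdne this
  rcases eq_or_lt_of_le hn1 with hn1' | hn2
  · -- the case n = 1
    subst hn1'
    have hx1 : ‖x 0‖ = 1 := by
      have h1 : Complex.normSq (x 0) = 1 := by simpa using hx
      rw [Complex.norm_def, h1, Real.sqrt_one]
    have hy1 : ‖y 0‖ = 1 := by
      have h1 : Complex.normSq (y 0) = 1 := by simpa using hy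
      rw [Complex.norm_def, h1, Real.sqrt_one]
    have hS1 : ‖S‖ = 1 := by
      rw [hSdef, Fin.sum_univ_one, norm_mul, Complex.norm_conj, hy1, hx1, mul_one]
    rw [hS1]
    norm_num
  -- main case : 2 ≤ n
  have hn2' : 2 ≤ n := hn2
  have hH1 : 1 ≤ maxEntry A := by
    rcases Nat.eq_zero_or_pos (maxEntry A) with h0 | h
    · exfalso
      have hB0 : B = 0 := by
        ext i j
        have h1 := hent i j
        rw [h0] at h1
        simpa using norm_eq_zero.mp (le_antisymm (by simpa using h1)
          (norm_nonneg _))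
      have hlam0 : lam = 0 := by
        have h1 := hlamabs
        rw [h0] at h1
        simp at h1
        exact h1
      have hXn : B.charpoly = X ^ n := by
        apply Polynomial.funext
        intro t
        rw [Stmt6Aux.eval_charpoly, hB0]
        simp [Matrix.det_smul]
      rw [hXn, hlam0] at hsimple
      have hXn' : Polynomial.rootMultiplicity (0 : ℂ) ((X : ℂ[X]) ^ n) = n := by
        simpa using Polynomial.rootMultiplicity_X_sub_C_pow (0 : ℂ) n
      rw [hXn'] at hsimple
      omega
    · exact h
  set Hr : ℝ := (maxEntry A : ℝ) with hHrdef
  have hHr1 : (1 : ℝ) ≤ Hr := by rw [hHrdef]; exact_mod_cast hH1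
  have hnR : (2 : ℝ) ≤ (n : ℝ) := by exact_mod_cast hn2'
  set En : ℝ := 2 * ((n : ℝ) * Hr) with hEndef
  have hEn1 : (1 : ℝ) ≤ En := by rw [hEndef]; nlinarith
  -- the matrix M = lam•1 - B
  set M := lam • (1 : Matrix (Fin n) (Fin n) ℂ) - B with hMdef
  have hdetM : M.det = 0 := by
    rw [hMdef, ← Stmt6Aux.eval_charpoly, hproot]
  have hMx : M.mulVec x = 0 := by
    rw [hMdef, Matrix.sub_mulVec, Matrix.smul_mulVec, Matrix.one_mulVec, hright, sub_self]
  have hsmul1 : Matrix.vecMul (star y) (lam • (1 : Matrix (Fin n) (Fin n) ℂ)) =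
      lam • star y := by
    funext j
    simp only [Matrix.vecMul, dotProduct, Matrix.smul_apply, Matrix.one_apply,
      smul_eq_mul, Pi.smul_apply]
    rw [Finset.sum_congr rfl (fun i _ =>
      show star y i * (lam * if i = j then 1 else 0) =
        (if i = j then lam * star y i else 0) from by split <;> ring)]
    rw [Finset.sum_ite_eq' Finset.univ j (fun i => lam * star y i)]
    simp
  have hyM : Matrix.vecMul (star y) M = 0 := by
    rw [hMdef, Matrix.vecMul_sub, hsmul1, hleft, sub_self]
  set c0 := (derivative ((-M).charpoly)).eval 0 with hc0def
  have hcomp : (-M).charpoly = B.charpoly.comp (X + C lam) := by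
    apply Polynomial.funext
    intro t
    rw [Polynomial.eval_comp, Polynomial.eval_add, Polynomial.eval_X, Polynomial.eval_C,
      Stmt6Aux.eval_charpoly, Stmt6Aux.eval_charpoly]
    congr 1
    rw [hMdef]
    module
  have hc0 : c0 = (derivative B.charpoly).eval lam := by
    rw [hc0def, hcomp, Polynomial.derivative_comp]
    simp [Polynomial.eval_comp]
  have hc0ne : c0 ≠ 0 := by rw [hc0]; exact hd'
  have hadjx : M.adjugate.mulVec x = c0 • x := Stmt6Aux.adj_mulVec_of_kernel M hdetM x hMx
  have hyadj : Matrix.vecMul (star y) M.adjugate = c0 • star y :=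
    Stmt6Aux.vecMul_adj_of_kernel M hdetM (star y) hyM
  obtain ⟨ia, hia⟩ : ∃ i, x i ≠ 0 := by
    by_contra h
    push_neg at h
    exact hx0 (funext h)
  obtain ⟨i0, j0, hadj00⟩ : ∃ i0 j0, M.adjugate i0 j0 ≠ 0 := by
    by_contra h
    push_neg at h
    have h1 : M.adjugate.mulVec x = 0 := by
      funext i
      simp [Matrix.mulVec, dotProduct, h]
    rw [hadjx] at h1
    have h2 := congrFun h1 ia
    simp only [Pi.smul_apply, smul_eq_mul, Pi.zero_apply] at h2
    rcases mul_eq_zero.mp h2 with h3 | h3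
    · exact hc0ne h3
    · exact hia h3
  set U := M.updateRow j0 (Pi.single i0 1) with hUdef
  have hUdet : U.det ≠ 0 := by
    rw [hUdef, ← Matrix.adjugate_apply]
    exact hadj00
  have hUinv : U⁻¹ * U = 1 := Matrix.nonsing_inv_mul U (Ne.isUnit hUdet)
  set w : Fin n → ℂ := U⁻¹.mulVec (Pi.single j0 1) with hwdef
  have hker : ∀ v : Fin n → ℂ, M.mulVec v = 0 → v = v i0 • w := by
    intro v hv
    have hUv : U.mulVec v = v i0 • (Pi.single j0 1 : Fin n → ℂ) := by
      funext a
      by_cases ha : a = j0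
      · subst ha
        simp [hUdef, Matrix.mulVec, dotProduct, Matrix.updateRow_self, Pi.single_apply]
      · have h1 : (U.mulVec v) a = (M.mulVec v) a := by
          simp [hUdef, Matrix.mulVec, dotProduct, Matrix.updateRow_ne ha]
        rw [h1, hv]
        simp [Pi.single_apply, Ne.symm ha, ha]
    calc v = (U⁻¹ * U).mulVec v := by rw [hUinv, Matrix.one_mulVec]
      _ = U⁻¹.mulVec (U.mulVec v) := (Matrix.mulVec_mulVec _ _ _).symm
      _ = U⁻¹.mulVec (v i0 • (Pi.single j0 1 : Fin n → ℂ)) := by rw [hUv]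
      _ = v i0 • w := by rw [Matrix.mulVec_smul, hwdef]
  have hxw : x = x i0 • w := hker x hMx
  have hMadj : M * M.adjugate = 0 := by rw [Matrix.mul_adjugate, hdetM, zero_smul]
  have hstruct : ∀ i j, M.adjugate i j = M.adjugate i0 j * w i := by
    intro i j
    have h1 : M.mulVec (fun i => M.adjugate i j) = 0 := by
      funext i
      have h2 := congrFun (congrFun hMadj i) j
      simpa [Matrix.mul_apply, Matrix.mulVec, dotProduct] using h2
    have h3 := congrFun (hker _ h1) i
    simpa using h3
  set T : ℂ := ∑ i, (starRingEnd ℂ) (y i) * w i with hTdef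
  have hScol : S = x i0 * T := by
    rw [hSdef, hTdef, Finset.mul_sum]
    apply Finset.sum_congr rfl
    intro i _
    have h1 := congrFun hxw i
    simp only [Pi.smul_apply, smul_eq_mul] at h1
    rw [h1]
    ring
  have hcolS : ∀ j, M.adjugate i0 j * T = c0 * (starRingEnd ℂ) (y j) := by
    intro j
    have h1 := congrFun hyadj j
    simp only [Matrix.vecMul, dotProduct, Pi.smul_apply, smul_eq_mul] at h1
    have h2 : ∑ i, (star y) i * M.adjugate i j = M.adjugate i0 j * T := by
      rw [hTdef, Finset.mul_sum]
      apply Finset.sum_congr rfl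
      intro i _
      rw [hstruct i j]
      simp only [Pi.star_apply, RCLike.star_def]
      ring
    rw [← h2]
    convert h1 using 2
    rfl
  obtain ⟨i1, hi1⟩ := Stmt6Aux.exists_coord_big hx
  obtain ⟨j1, hj1⟩ := Stmt6Aux.exists_coord_big hy
  have hw1 : x i1 = x i0 * w i1 := by
    have h1 := congrFun hxw i1
    simpa using h1
  have hkey : M.adjugate i1 j1 * S = c0 * (starRingEnd ℂ) (y j1) * x i1 := by
    rw [hstruct i1 j1, hScol]
    calc M.adjugate i0 j1 * w i1 * (x i0 * T)
        = (M.adjugate i0 j1 * T) * (x i0 * w i1) := by ring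
      _ = c0 * (starRingEnd ℂ) (y j1) * x i1 := by rw [hcolS j1, ← hw1]
  have habskey : ‖M.adjugate i1 j1‖ * ‖S‖ =
      ‖c0‖ * ‖y j1‖ * ‖x i1‖ := by
    have h1 := congrArg (‖·‖) hkey
    rwa [norm_mul, norm_mul, norm_mul, Complex.norm_conj] at h1
  -- bound on the adjugate entry
  have hadjbound : ‖M.adjugate i1 j1‖ ≤ (n : ℝ) ^ n * En ^ n := by
    rw [Matrix.adjugate_apply]
    have hentU : ∀ a b, ‖(M.updateRow j1 (Pi.single i1 1)) a b‖ ≤ En := by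
      intro a b
      by_cases ha : a = j1
      · subst ha
        rw [Matrix.updateRow_self]
        by_cases hb : b = i1
        · subst hb; simp [Pi.single_apply]; linarith
        · simp [Pi.single_apply, Ne.symm hb, hb]; linarith
      · rw [Matrix.updateRow_ne ha, hMdef]
        simp only [Matrix.sub_apply, Matrix.smul_apply, Matrix.one_apply, smul_eq_mul]
        by_cases hab : a = b
        · subst hab
          simp only [if_true]
          calc ‖lam * 1 - B a a‖
              ≤ ‖lam * 1‖ + ‖B a a‖ := norm_sub_le _ _
            _ ≤ (n : ℝ) * Hr + Hr := by
                rw [mul_one]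
                exact add_le_add hlamabs (hent a a)
            _ ≤ En := by rw [hEndef]; nlinarith
        · simp only [if_neg hab]
          calc ‖lam * 0 - B a b‖ = ‖B a b‖ := by
                rw [mul_zero, zero_sub, norm_neg]
            _ ≤ Hr := hent a b
            _ ≤ En := by rw [hEndef]; nlinarith
    have h1 := Matrix.det_le (abv := IsAbsoluteValue.toAbsoluteValue (norm : ℂ → ℝ)) hentU
    rw [Fintype.card_fin] at h1
    calc ‖(M.updateRow j1 (Pi.single i1 1)).det‖
        ≤ n.factorial • En ^ n := h1
      _ = (n.factorial : ℝ) * En ^ n := by rw [nsmul_eq_mul]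
      _ ≤ (n : ℝ) ^ n * En ^ n := by
          apply mul_le_mul_of_nonneg_right _ (by positivity)
          exact_mod_cast Nat.factorial_le_pow n
  -- lower bound on the derivative via the algebraic norm
  have hmapp : B.charpoly = (A.charpoly).map (Int.castRingHom ℂ) := by
    rw [← Matrix.charpoly_map A (Int.castRingHom ℂ)]
    rfl
  have haev : ∀ μ : ℂ, Polynomial.aeval μ (A.charpoly) = B.charpoly.eval μ := by
    intro μ
    rw [hmapp, Polynomial.eval_map, Polynomial.aeval_def]
    rfl
  have haevd : ∀ μ : ℂ, Polynomial.aeval μ (derivative (A.charpoly)) =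
      (derivative B.charpoly).eval μ := by
    intro μ
    rw [hmapp, Polynomial.derivative_map, Polynomial.eval_map, Polynomial.aeval_def]
    rfl
  have hAdeg : (A.charpoly).natDegree = n := by simpa using A.charpoly_natDegree_eq_dim
  have hallroots : ∀ v ∈ B.charpoly.roots, ‖v‖ ≤ (n : ℝ) * Hr := by
    intro v hv
    have hvroot : B.charpoly.IsRoot v := Polynomial.isRoot_of_mem_roots hv
    have hdet : (v • (1 : Matrix (Fin n) (Fin n) ℂ) - B).det = 0 := by
      rw [← Stmt6Aux.eval_charpoly]
      exact hvroot
    obtain ⟨u, hu0, hu⟩ := (Matrix.exists_mulVec_eq_zero_iff).mpr hdet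
    have h2 : B.mulVec u = v • u := by
      rw [Matrix.sub_mulVec, Matrix.smul_mulVec, Matrix.one_mulVec, sub_eq_zero] at hu
      exact hu.symm
    exact Stmt6Aux.eig_abs_le hent hu0 h2
  have hlower : 1 ≤ ‖(derivative B.charpoly).eval lam‖ *
      (En ^ (n - 1)) ^ (n - 1) := by
    have h1 := Stmt6Aux.norm_prod_lower (A.charpoly) (derivative (A.charpoly))
      (A.charpoly_monic) lam
      (by rw [haev]; exact hproot)
      (by rw [haevd]; exact hd')
      (En ^ (n - 1)) (one_le_pow₀ hEn1)
      ?_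
    · rw [haevd, hAdeg] at h1
      exact h1
    · intro μ hμ
      rw [haev] at hμ
      rw [haevd]
      have h2 := Stmt6Aux.deriv_eval_root_le hpm (p := B.charpoly) (μ := μ) hμ
        ((n : ℝ) * Hr) (by positivity) hallroots
      rw [hnatdeg] at h2
      rw [hEndef]
      exact h2
  -- combine everything
  have hSpos : 0 < ‖S‖ := norm_pos_iff.mpr hS0
  rw [div_le_iff₀ hSpos]
  have hax : (0:ℝ) ≤ ‖x i1‖ := norm_nonneg _
  have hay : (0:ℝ) ≤ ‖y j1‖ := norm_nonneg _
  have hnab : 1 ≤ (n : ℝ) * (‖x i1‖ * ‖y j1‖) := by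
    have h1 : 1 ≤ (n : ℝ) * (‖x i1‖) ^ 2 := by
      rw [← Complex.sq_norm] at hi1
      exact hi1
    have h2 : 1 ≤ (n : ℝ) * (‖y j1‖) ^ 2 := by
      rw [← Complex.sq_norm] at hj1
      exact hj1
    have h3 : 1 ≤ ((n : ℝ) * (‖x i1‖ * ‖y j1‖)) ^ 2 := by
      calc (1:ℝ) ≤ ((n : ℝ) * (‖x i1‖) ^ 2) *
            ((n : ℝ) * (‖y j1‖) ^ 2) := by nlinarith
        _ = ((n : ℝ) * (‖x i1‖ * ‖y j1‖)) ^ 2 := by ring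
    nlinarith [mul_nonneg (mul_nonneg (by positivity : (0:ℝ) ≤ (n:ℝ)) hax) hay]
  have hstep1 : (1:ℝ) ≤ (‖(derivative B.charpoly).eval lam‖ *
      (En ^ (n - 1)) ^ (n - 1)) * ((n : ℝ) * (‖x i1‖ * ‖y j1‖)) :=
    one_le_mul_of_one_le_of_one_le hlower hnab
  have hc0abs : ‖c0‖ = ‖(derivative B.charpoly).eval lam‖ := by
    rw [hc0]
  have hFnn : (0:ℝ) ≤ (En ^ (n - 1)) ^ (n - 1) := by positivity
  calc (1:ℝ)
      ≤ (‖(derivative B.charpoly).eval lam‖ * (En ^ (n - 1)) ^ (n - 1)) *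
          ((n : ℝ) * (‖x i1‖ * ‖y j1‖)) := hstep1
    _ = (‖c0‖ * ‖y j1‖ * ‖x i1‖) *
          ((n : ℝ) * (En ^ (n - 1)) ^ (n - 1)) := by rw [hc0abs]; ring
    _ = (‖M.adjugate i1 j1‖ * ‖S‖) *
          ((n : ℝ) * (En ^ (n - 1)) ^ (n - 1)) := by rw [habskey]
    _ ≤ ((n : ℝ) ^ n * En ^ n * ‖S‖) *
          ((n : ℝ) * (En ^ (n - 1)) ^ (n - 1)) := by
        apply mul_le_mul_of_nonneg_right _ (by positivity)
        exact mul_le_mul_of_nonneg_right hadjbound hSpos.le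
    _ = ((n : ℝ) ^ (n + 1) * En ^ (n + (n - 1) * (n - 1))) * ‖S‖ := by
        rw [pow_succ, pow_add, pow_mul]
        ring
    _ ≤ ((n : ℝ) ^ (3 * n) * 2 ^ (2 * n) *
          (2 * Real.sqrt n * Hr) ^ (2 * n ^ 3 - 2 * n)) * ‖S‖ := by
        apply mul_le_mul_of_nonneg_right _ hSpos.le
        have := Stmt6Aux.final_numeric n hn2' Hr hHr1
        rw [hEndef]
        exact this
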